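/- arXiv:math/9810201 — 3 statements merged into one kernel-verified Lean document; each statement's English description precedes it below -/
import Mathlib

section
/- If J is a finite index subgroup of a finitely generated group G and J admits an asynchronous combing, then G admits an asynchronous combing. -/
section Combings

variable {G : Type*} [Group G]

/-- `S` is a finite, symmetric (inverse-closed) generating set of `G`;
it plays the role of `X ∪ X⁻¹` for a finite generating set `X`. -/
def IsSymmGenSet (S : Set G) : Prop :=
  S.Finite ∧ (∀ x ∈ S, x⁻¹ ∈ S) ∧ Subgroup.closure S = ⊤

/-- The word metric on `G` with respect to the generating set `S`:
the least length of a word over `S` representing `g⁻¹ * h`. -/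
noncomputable def wordDist (S : Set G) (g h : G) : ℕ :=
  sInf {n | ∃ w : List G, (∀ x ∈ w, x ∈ S) ∧ w.length = n ∧ w.prod = g⁻¹ * h}

/-- The point reached at (integer) time `t` along the path in the Cayley graph
starting at the identity and labelled by the word `w`; for `t ≥ |w|` the path
stays at its endpoint. -/
def pathAt (w : List G) (t : ℕ) : G := (w.take t).prod

/-- The paths labelled by `v` and `w` synchronously `K`-fellow travel:
at each time `t` the corresponding points are at distance at most `K`. -/
def SyncFellow (S : Set G) (K : ℕ) (v w : List G) : Prop :=
  ∀ t : ℕ, wordDist S (pathAt v t) (pathAt w t) ≤ K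

/-- The paths labelled by `v` and `w` asynchronously `K`-fellow travel:
there is a monotone unit-speed-bounded reparametrisation `h` of the second path,
starting at `0` and eventually traversing all of `w`, keeping corresponding
points at distance at most `K`. -/
def AsyncFellow (S : Set G) (K : ℕ) (v w : List G) : Prop :=
  ∃ h : ℕ → ℕ, Monotone h ∧ h 0 = 0 ∧ (∀ t, h (t + 1) ≤ h t + 1) ∧
    (∃ T : ℕ, ∀ t, T ≤ t → w.length ≤ h t) ∧
    ∀ t : ℕ, wordDist S (pathAt v t) (pathAt w (h t)) ≤ K

/-- `L` is a language for `G` over `S`: a set of words over `S` that maps onto `G`. -/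
def IsLanguageFor (S : Set G) (L : Set (List G)) : Prop :=
  (∀ w ∈ L, ∀ x ∈ w, x ∈ S) ∧ ∀ g : G, ∃ w ∈ L, w.prod = g

/-- Two words represent group elements that are equal or differ by right
multiplication by a generator from `S`. -/
def GenRelated (S : Set G) (v w : List G) : Prop :=
  v.prod = w.prod ∨ ∃ x ∈ S, w.prod = v.prod * x

/-- `L` is an asynchronous combing for `G` over `S`. -/
def IsAsyncCombing (S : Set G) (L : Set (List G)) : Prop :=
  IsLanguageFor S L ∧ ∃ K : ℕ, ∀ v ∈ L, ∀ w ∈ L, GenRelated S v w → AsyncFellow S K v w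

/-- `L` is a synchronous combing for `G` over `S`. -/
def IsSyncCombing (S : Set G) (L : Set (List G)) : Prop :=
  IsLanguageFor S L ∧ ∃ K : ℕ, ∀ v ∈ L, ∀ w ∈ L, GenRelated S v w → SyncFellow S K v w

/-- `G` admits an asynchronous combing (it is asynchronously combable). -/
def AsyncCombable (G : Type*) [Group G] : Prop :=
  ∃ (S : Set G) (L : Set (List G)), IsSymmGenSet S ∧ IsAsyncCombing S L

end Combings

section Aux

variable {G : Type*} [Group G] {S : Set G}

lemma wordDist_le (S : Set G) {g h : G} {w : List G} (hw : ∀ x ∈ w, x ∈ S)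
    (hp : w.prod = g⁻¹ * h) : wordDist S g h ≤ w.length :=
  Nat.sInf_le ⟨w, hw, rfl, hp⟩

lemma wordDist_self (S : Set G) (g : G) : wordDist S g g = 0 :=
  Nat.le_zero.mp (by simpa using wordDist_le S (w := []) (g := g) (h := g) (by simp) (by simp))

lemma exists_word (hS : IsSymmGenSet S) (g : G) :
    ∃ w : List G, (∀ x ∈ w, x ∈ S) ∧ w.prod = g := by
  obtain ⟨-, hsymm, hgen⟩ := hS
  have hg : g ∈ Submonoid.closure (S ∪ S⁻¹) := by
    rw [← Subgroup.closure_toSubmonoid, hgen]; trivial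
  obtain ⟨l, hl, hp⟩ := Submonoid.exists_list_of_mem_closure hg
  refine ⟨l, fun x hx => ?_, hp⟩
  rcases hl x hx with h | h
  · exact h
  · simpa using hsymm _ h

lemma exists_wordDist_word (hS : IsSymmGenSet S) (g h : G) :
    ∃ w : List G, (∀ x ∈ w, x ∈ S) ∧ w.length = wordDist S g h ∧ w.prod = g⁻¹ * h := by
  have hne : {n | ∃ w : List G, (∀ x ∈ w, x ∈ S) ∧ w.length = n ∧ w.prod = g⁻¹ * h}.Nonempty := by
    obtain ⟨w, hw, hp⟩ := exists_word hS (g⁻¹ * h)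
    exact ⟨w.length, w, hw, rfl, hp⟩
  have := Nat.sInf_mem hne
  obtain ⟨w, hw, hl, hp⟩ := this
  exact ⟨w, hw, hl, hp⟩

lemma wordDist_triangle (hS : IsSymmGenSet S) (a b c : G) :
    wordDist S a c ≤ wordDist S a b + wordDist S b c := by
  obtain ⟨w1, hw1, hl1, hp1⟩ := exists_wordDist_word hS a b
  obtain ⟨w2, hw2, hl2, hp2⟩ := exists_wordDist_word hS b c
  calc wordDist S a c ≤ (w1 ++ w2).length := by
        refine wordDist_le S (fun x hx => ?_) (by simp [hp1, hp2, mul_assoc])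
        rcases List.mem_append.mp hx with h | h
        · exact hw1 x h
        · exact hw2 x h
    _ = wordDist S a b + wordDist S b c := by simp [hl1, hl2]

/-- A strengthened form of asynchronous fellow travelling where the
reparametrisation is bounded below by `t - T`. -/
def StrongFellow (S : Set G) (K : ℕ) (v w : List G) : Prop :=
  ∃ h : ℕ → ℕ, ∃ T : ℕ, Monotone h ∧ h 0 = 0 ∧ (∀ t, h (t + 1) ≤ h t + 1) ∧
    (∀ t, t - T ≤ h t) ∧
    ∀ t : ℕ, wordDist S (pathAt v t) (pathAt w (h t)) ≤ K

lemma pathAt_of_length_le {w : List G} {t : ℕ} (h : w.length ≤ t) : pathAt w t = w.prod := by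
  simp [pathAt, List.take_of_length_le h]

lemma StrongFellow.toAsync {K : ℕ} {v w : List G} (h : StrongFellow S K v w) :
    AsyncFellow S K v w := by
  obtain ⟨f, T, hmono, h0, hstep, hlow, hdist⟩ := h
  exact ⟨f, hmono, h0, hstep, ⟨T + w.length, fun t ht => le_trans (by omega) (hlow t)⟩, hdist⟩

lemma AsyncFellow.toStrong {K : ℕ} {v w : List G} (h : AsyncFellow S K v w) :
    StrongFellow S K v w := by
  obtain ⟨f, hmono, h0, hstep, ⟨T, hT⟩, hdist⟩ := h
  refine ⟨fun t => max (f t) (t - T), T, ?_, by simp [h0], ?_, fun t => le_max_right _ _, ?_⟩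
  · exact fun a b hab => max_le_max (hmono hab) (by omega)
  · intro t
    have := hstep t
    simp only [max_le_iff]
    constructor
    · omega
    · have : t + 1 - T ≤ (t - T) + 1 := by omega
      omega
  · intro t
    rcases le_or_gt (t - T) (f t) with hc | hc
    · simpa [max_eq_left hc] using hdist t
    · have hTt : T ≤ t := by omega
      have h1 : w.length ≤ f t := hT t hTt
      have h2 : pathAt w (max (f t) (t - T)) = pathAt w (f t) := by
        rw [pathAt_of_length_le (le_trans h1 (le_max_left _ _)), pathAt_of_length_le h1]
      rw [h2]; exact hdist t

lemma StrongFellow.mono {K K' : ℕ} {v w : List G} (h : StrongFellow S K v w) (hK : K ≤ K') :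
    StrongFellow S K' v w := by
  obtain ⟨f, T, h1, h2, h3, h4, h5⟩ := h
  exact ⟨f, T, h1, h2, h3, h4, fun t => le_trans (h5 t) hK⟩

lemma StrongFellow.trans (hS : IsSymmGenSet S) {K1 K2 : ℕ} {u v w : List G}
    (h1 : StrongFellow S K1 u v) (h2 : StrongFellow S K2 v w) :
    StrongFellow S (K1 + K2) u w := by
  obtain ⟨f1, T1, m1, z1, s1, l1, d1⟩ := h1
  obtain ⟨f2, T2, m2, z2, s2, l2, d2⟩ := h2
  refine ⟨fun t => f2 (f1 t), T1 + T2, fun a b hab => m2 (m1 hab), by simp [z1, z2], ?_, ?_, ?_⟩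
  · intro t
    calc f2 (f1 (t + 1)) ≤ f2 (f1 t + 1) := m2 (s1 t)
      _ ≤ f2 (f1 t) + 1 := s2 _
  · intro t
    show t - (T1 + T2) ≤ f2 (f1 t)
    have := l1 t
    have := l2 (f1 t)
    omega
  · intro t
    calc wordDist S (pathAt u t) (pathAt w (f2 (f1 t)))
        ≤ wordDist S (pathAt u t) (pathAt v (f1 t))
          + wordDist S (pathAt v (f1 t)) (pathAt w (f2 (f1 t))) := wordDist_triangle hS _ _ _
      _ ≤ K1 + K2 := add_le_add (d1 t) (d2 _)

lemma chainFellow (hS : IsSymmGenSet S) {L : Set (List G)} (hL : IsLanguageFor S L) {K : ℕ}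
    (hK : ∀ v ∈ L, ∀ w ∈ L, GenRelated S v w → AsyncFellow S K v w) :
    ∀ (xs : List G), (∀ x ∈ xs, x ∈ S) → ∀ v ∈ L, ∀ w ∈ L,
      w.prod = v.prod * xs.prod → StrongFellow S (K * (xs.length + 1)) v w := by
  intro xs
  induction xs with
  | nil =>
    intro _ v hv w hw hp
    simp only [List.prod_nil, mul_one] at hp
    have := (hK v hv w hw (Or.inl hp.symm)).toStrong
    exact this.mono (by simp [Nat.le_mul_of_pos_right])
  | cons x xs ih =>
    intro hmem v hv w hw hp
    obtain ⟨u, hu, hup⟩ := hL.2 (v.prod * x)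
    have h1 : StrongFellow S K v u :=
      (hK v hv u hu (Or.inr ⟨x, hmem x (by simp), hup⟩)).toStrong
    have h2 : StrongFellow S (K * (xs.length + 1)) u w := by
      refine ih (fun y hy => hmem y (by simp [hy])) u hu w hw ?_
      rw [hup, hp, List.prod_cons, mul_assoc]
    have := h1.trans hS h2
    refine this.mono ?_
    simp only [List.length_cons]
    ring_nf
    omega

end Aux


section Aux2

variable {G : Type*} [Group G] {S : Set G}

lemma strongFellow_snoc_left {v : List G} {a : G} (ha : a⁻¹ ∈ S) :
    StrongFellow S 1 (v ++ [a]) v := by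
  refine ⟨id, 0, monotone_id, rfl, fun t => le_refl _, fun t => le_refl _, ?_⟩
  intro t
  simp only [id_eq]
  rcases le_or_gt t v.length with h | h
  · have : pathAt (v ++ [a]) t = pathAt v t := by
      simp [pathAt, List.take_append_of_le_length h]
    rw [this]; simp [wordDist_self]
  · have h1 : pathAt (v ++ [a]) t = v.prod * a := by
      rw [pathAt_of_length_le (by simp; omega)]; simp
    have h2 : pathAt v t = v.prod := pathAt_of_length_le (by omega)
    rw [h1, h2]
    simpa using wordDist_le S (w := [a⁻¹]) (by simpa using ha) (by simp [mul_assoc])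

lemma strongFellow_snoc_right {v : List G} {a : G} (ha : a ∈ S) :
    StrongFellow S 1 v (v ++ [a]) := by
  refine ⟨id, 0, monotone_id, rfl, fun t => le_refl _, fun t => le_refl _, ?_⟩
  intro t
  simp only [id_eq]
  rcases le_or_gt t v.length with h | h
  · have : pathAt (v ++ [a]) t = pathAt v t := by
      simp [pathAt, List.take_append_of_le_length h]
    rw [this]; simp [wordDist_self]
  · have h1 : pathAt (v ++ [a]) t = v.prod * a := by
      rw [pathAt_of_length_le (by simp; omega)]; simp
    have h2 : pathAt v t = v.prod := pathAt_of_length_le (by omega)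
    rw [h1, h2]
    simpa using wordDist_le S (w := [a]) (by simpa using ha) (by simp)

lemma pathAt_map {H : Type*} [Group H] (f : H →* G) (w : List H) (t : ℕ) :
    pathAt (w.map f) t = f (pathAt w t) := by
  simp [pathAt, ← List.map_take, List.prod_hom]

lemma wordDist_map_le {H : Type*} [Group H] {SH : Set H} (hSH : IsSymmGenSet SH)
    (f : H →* G) (hsub : ∀ x ∈ SH, f x ∈ S) (a b : H) :
    wordDist S (f a) (f b) ≤ wordDist SH a b := by
  obtain ⟨w, hw, hl, hp⟩ := exists_wordDist_word hSH a b
  calc wordDist S (f a) (f b) ≤ (w.map f).length := by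
        refine wordDist_le S (fun x hx => ?_) ?_
        · obtain ⟨y, hy, rfl⟩ := List.mem_map.mp hx
          exact hsub y (hw y hy)
        · rw [List.prod_hom, hp]; simp
    _ = wordDist SH a b := by simp [hl]

lemma StrongFellow.map {H : Type*} [Group H] {SH : Set H} (hSH : IsSymmGenSet SH)
    (f : H →* G) (hsub : ∀ x ∈ SH, f x ∈ S) {K : ℕ} {v w : List H}
    (hvw : StrongFellow SH K v w) : StrongFellow S K (v.map f) (w.map f) := by
  obtain ⟨g, T, m1, z1, s1, l1, d1⟩ := hvw
  refine ⟨g, T, m1, z1, s1, l1, fun t => ?_⟩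
  rw [pathAt_map, pathAt_map]
  exact le_trans (wordDist_map_le hSH f hsub _ _) (d1 t)

lemma exists_uniform_bound {α : Type*} {F : Set α} (hF : F.Finite) (P : α → ℕ → Prop)
    (h : ∀ f ∈ F, ∃ n, P f n) : ∃ m, ∀ f ∈ F, ∃ n ≤ m, P f n := by
  classical
  choose! n hn using h
  exact ⟨hF.toFinset.sup n, fun f hf =>
    ⟨n f, Finset.le_sup (hF.mem_toFinset.mpr hf), hn f hf⟩⟩

end Aux2

/-- If `J` is a finite index subgroup of a finitely generated group `G` and `J`
admits an asynchronous combing, then `G` admits an asynchronous combing. -/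
theorem asyncCombable_of_finiteIndex_subgroup {G : Type*} [Group G] [Group.FG G]
    (J : Subgroup G) (hJ : J.FiniteIndex) (h : AsyncCombable J) :
    AsyncCombable G := by
  classical
  obtain ⟨SJ, LJ, hSJ, hLJ, K, hK⟩ := h
  haveI : J.FiniteIndex := hJ
  haveI : Finite (G ⧸ J) := Subgroup.finite_quotient_of_finiteIndex
  set rep : G ⧸ J → G := fun q => q.out with hrep
  have key : ∀ g : G, g * rep (QuotientGroup.mk g⁻¹) ∈ J := by
    intro g
    have h1 : (QuotientGroup.mk (rep (QuotientGroup.mk g⁻¹)) : G ⧸ J)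
        = QuotientGroup.mk g⁻¹ := Quotient.out_eq _
    have h2 := QuotientGroup.eq.mp h1
    have := inv_mem h2
    simpa using this
  set T : Set G := Set.range rep with hT
  set SG : Set G := (J.subtype '' SJ) ∪ (T ∪ T⁻¹) ∪ {1} with hSG
  have hone : (1 : G) ∈ SG := by simp [hSG]
  have hTsub : T ⊆ SG := fun x hx => by
    rw [hSG]; exact Or.inl (Or.inr (Or.inl hx))
  have hTinvsub : T⁻¹ ⊆ SG := fun x hx => by
    rw [hSG]; exact Or.inl (Or.inr (Or.inr hx))
  have hJsub : ∀ x ∈ SJ, J.subtype x ∈ SG := fun x hx => by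
    rw [hSG]; exact Or.inl (Or.inl ⟨x, hx, rfl⟩)
  have hSGfin : SG.Finite :=
    (((hSJ.1.image _).union ((Set.finite_range rep).union
      (Set.finite_range rep).inv))).union (Set.finite_singleton 1)
  have hSGsymm : ∀ x ∈ SG, x⁻¹ ∈ SG := by
    intro x hx
    rw [hSG] at hx ⊢
    rcases hx with (⟨y, hy, rfl⟩ | hx | hx) | hx
    · exact Or.inl (Or.inl ⟨y⁻¹, hSJ.2.1 y hy, by simp⟩)
    · exact Or.inl (Or.inr (Or.inr (by simpa using hx)))
    · exact Or.inl (Or.inr (Or.inl (by simpa using hx)))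
    · simp only [Set.mem_singleton_iff] at hx
      simp [hx]
  have hJle : J ≤ Subgroup.closure SG := by
    have h1 : J = Subgroup.closure (J.subtype '' SJ) := by
      rw [← MonoidHom.map_closure, hSJ.2.2, ← MonoidHom.range_eq_map, Subgroup.range_subtype]
    rw [h1]
    exact Subgroup.closure_mono (fun x hx => by rw [hSG]; exact Or.inl (Or.inl hx))
  have hSGgen : Subgroup.closure SG = ⊤ := by
    rw [eq_top_iff]
    intro g _
    have hdecomp : g = (g * rep (QuotientGroup.mk g⁻¹)) * (rep (QuotientGroup.mk g⁻¹))⁻¹ := by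
      group
    rw [hdecomp]
    exact mul_mem (hJle (key g))
      (inv_mem (Subgroup.subset_closure (hTsub ⟨_, rfl⟩)))
  have hSGsgs : IsSymmGenSet SG := ⟨hSGfin, hSGsymm, hSGgen⟩
  set LG : Set (List G) :=
    { u | ∃ w ∈ LJ, ∃ q : G ⧸ J, u = (w.map (J.subtype)) ++ [(rep q)⁻¹] } with hLG
  have hLGlang : IsLanguageFor SG LG := by
    constructor
    · rintro u ⟨w, hw, q, rfl⟩ x hx
      rcases List.mem_append.mp hx with hx | hx
      · obtain ⟨y, hy, rfl⟩ := List.mem_map.mp hx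
        exact hJsub y (hLJ.1 w hw y hy)
      · simp only [List.mem_singleton] at hx
        subst hx
        refine hTinvsub ?_
        rw [Set.mem_inv, inv_inv]
        exact ⟨q, rfl⟩
    · intro g
      obtain ⟨w, hw, hwp⟩ := hLJ.2 ⟨g * rep (QuotientGroup.mk g⁻¹), key g⟩
      refine ⟨(w.map (J.subtype)) ++ [(rep (QuotientGroup.mk g⁻¹))⁻¹],
        ⟨w, hw, QuotientGroup.mk g⁻¹, rfl⟩, ?_⟩
      rw [List.prod_append, List.prod_hom, hwp]
      simp
  set F : Set G := (fun p : (G ⧸ J) × (G ⧸ J) × G => (rep p.1)⁻¹ * p.2.2 * rep p.2.1) ''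
    (Set.univ ×ˢ Set.univ ×ˢ SG) with hF
  have hFfin : F.Finite :=
    ((Set.finite_univ.prod (Set.finite_univ.prod hSGfin))).image _
  obtain ⟨m, hm⟩ := exists_uniform_bound hFfin
    (fun f n => f ∈ (J : Set G) → ∃ xs : List J, (∀ x ∈ xs, x ∈ SJ) ∧
      ((xs.prod : J) : G) = f ∧ xs.length = n) (by
      intro f _
      by_cases hf : f ∈ (J : Set G)
      · obtain ⟨xs, hxs, hxsp⟩ := exists_word hSJ (⟨f, hf⟩ : J)
        exact ⟨xs.length, fun _ => ⟨xs, hxs, by rw [hxsp], rfl⟩⟩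
      · exact ⟨0, fun hc => absurd hc hf⟩)
  refine ⟨SG, LG, hSGsgs, hLGlang, K * (m + 1) + 2, ?_⟩
  rintro v' ⟨v, hv, q1, rfl⟩ w' ⟨w, hw, q2, rfl⟩ hrel
  obtain ⟨x, hx, hxeq⟩ : ∃ x ∈ SG,
      ((w.map (J.subtype)) ++ [(rep q2)⁻¹]).prod
        = ((v.map (J.subtype)) ++ [(rep q1)⁻¹]).prod * x := by
    rcases hrel with heq | ⟨x, hx, hxeq⟩
    · exact ⟨1, hone, by rw [← heq, mul_one]⟩
    · exact ⟨x, hx, hxeq⟩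
  have hvprod : ((v.map (J.subtype)) ++ [(rep q1)⁻¹]).prod
      = ((v.prod : J) : G) * (rep q1)⁻¹ := by
    rw [List.prod_append, List.prod_hom]; simp
  have hwprod : ((w.map (J.subtype)) ++ [(rep q2)⁻¹]).prod
      = ((w.prod : J) : G) * (rep q2)⁻¹ := by
    rw [List.prod_append, List.prod_hom]; simp
  rw [hvprod, hwprod] at hxeq
  set f : G := (rep q1)⁻¹ * x * rep q2 with hfdef
  have hfF : f ∈ F := ⟨(q1, q2, x), by simp [hx], rfl⟩
  have hx2 : x = ((rep q1) * ((v.prod : J) : G)⁻¹) * (((w.prod : J) : G) * (rep q2)⁻¹) := by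
    rw [hxeq]; group
  have hfval : f = ((v.prod : J) : G)⁻¹ * ((w.prod : J) : G) := by
    rw [hfdef, hx2]; group
  have hfJ : f ∈ (J : Set G) := by
    rw [hfval]
    exact mul_mem (inv_mem (SetLike.coe_mem _)) (SetLike.coe_mem _)
  obtain ⟨n, hnm, hP⟩ := hm f hfF
  obtain ⟨xs, hxsS, hxsp, hxslen⟩ := hP hfJ
  have hwv : w.prod = v.prod * xs.prod := by
    have hcoe : ((w.prod : J) : G) = (((v.prod * xs.prod : J)) : G) := by
      rw [Subgroup.coe_mul, hxsp, hfval]; group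
    exact Subtype.coe_injective hcoe
  have hchain := chainFellow hSJ hLJ hK xs hxsS v hv w hw hwv
  have hchain2 : StrongFellow SJ (K * (m + 1)) v w :=
    hchain.mono (Nat.mul_le_mul_left K (by omega))
  have hmap : StrongFellow SG (K * (m + 1)) (v.map (J.subtype)) (w.map (J.subtype)) :=
    hchain2.map hSJ J.subtype hJsub
  have hleft : StrongFellow SG 1 ((v.map (J.subtype)) ++ [(rep q1)⁻¹]) (v.map (J.subtype)) :=
    strongFellow_snoc_left (by rw [inv_inv]; exact hTsub ⟨q1, rfl⟩)
  have hright : StrongFellow SG 1 (w.map (J.subtype))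
      ((w.map (J.subtype)) ++ [(rep q2)⁻¹]) :=
    strongFellow_snoc_right (hTinvsub (by rw [Set.mem_inv, inv_inv]; exact ⟨q2, rfl⟩))
  have hfinal := (hleft.trans hSGsgs hmap).trans hSGsgs hright
  exact (hfinal.mono (by omega)).toAsync
end

section
/- Every asynchronously combable finitely generated group is finitely presented. -/
/-- `G` is finitely presented: it is the quotient of a free group of finite rank
by the normal closure of finitely many relators. -/
def IsFinitelyPresented (G : Type*) [Group G] : Prop :=
  ∃ (n : ℕ) (f : FreeGroup (Fin n) →* G) (R : Finset (FreeGroup (Fin n))),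
    Function.Surjective f ∧ f.ker = Subgroup.normalClosure (R : Set (FreeGroup (Fin n)))

/-- Every asynchronously combable finitely generated group is finitely presented. -/
theorem isFinitelyPresented_of_asyncCombable {G : Type*} [Group G]
    (h : AsyncCombable G) : IsFinitelyPresented G := by
  classical
  unfold AsyncCombable at h
  obtain ⟨S, L, hSgs, hcomb0⟩ := h
  obtain ⟨hfin, hsym, hgen⟩ := hSgs
  obtain ⟨⟨hLS, hLsurj⟩, K, hcomb⟩ := hcomb0
  haveI : Fintype S := hfin.fintype
  set n := Fintype.card S with hn
  let e : Fin n ≃ S := (Fintype.equivFin S).symm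
  let f : FreeGroup (Fin n) →* G := FreeGroup.lift (fun i => (e i : G))
  have f_of : ∀ i : Fin n, f (FreeGroup.of i) = (e i : G) := fun i => FreeGroup.lift_apply_of
  -- every element of G is represented by a word over S
  have exists_word : ∀ g : G, ∃ w : List G, (∀ x ∈ w, x ∈ S) ∧ w.prod = g := by
    intro g
    have hg : g ∈ Subgroup.closure S := by rw [hgen]; trivial
    induction hg using Subgroup.closure_induction with
    | mem x hx => exact ⟨[x], by simp [hx], by simp⟩
    | one => exact ⟨[], by simp, by simp⟩
    | mul x y _ _ hx hy =>
        obtain ⟨w1, h1, p1⟩ := hx; obtain ⟨w2, h2, p2⟩ := hy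
        refine ⟨w1 ++ w2, ?_, by simp [p1, p2]⟩
        intro z hz
        rcases List.mem_append.1 hz with hz | hz
        exacts [h1 z hz, h2 z hz]
    | inv x _ hx =>
        obtain ⟨w, h1, p1⟩ := hx
        refine ⟨(w.map (·⁻¹)).reverse, ?_, ?_⟩
        · intro z hz
          simp only [List.mem_reverse, List.mem_map] at hz
          obtain ⟨a, ha, rfl⟩ := hz
          exact hsym a (h1 a ha)
        · rw [← p1, List.prod_inv_reverse]
  -- realizing word-distance bounds by words
  have dist_word : ∀ (a b : G) (k : ℕ), wordDist S a b ≤ k →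
      ∃ u : List G, (∀ x ∈ u, x ∈ S) ∧ u.length ≤ k ∧ u.prod = a⁻¹ * b := by
    intro a b k hk
    have hne : {m | ∃ w : List G, (∀ x ∈ w, x ∈ S) ∧ w.length = m ∧ w.prod = a⁻¹ * b}.Nonempty := by
      obtain ⟨w, hw, hp⟩ := exists_word (a⁻¹ * b)
      exact ⟨w.length, w, hw, rfl, hp⟩
    obtain ⟨u, hu, hlen, hp⟩ := Nat.sInf_mem hne
    refine ⟨u, hu, ?_, hp⟩
    rw [hlen]
    exact hk
  -- lifting letters and words to the free group
  let ι : G → FreeGroup (Fin n) := fun g =>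
    if hg : g ∈ S then FreeGroup.of (e.symm ⟨g, hg⟩) else 1
  let wlift : List G → FreeGroup (Fin n) := fun w => (w.map ι).prod
  have wlift_nil : wlift [] = 1 := rfl
  have wlift_cons : ∀ (a : G) (l : List G), wlift (a :: l) = ι a * wlift l := by
    intro a l; unfold wlift; simp
  have wlift_append : ∀ (l₁ l₂ : List G), wlift (l₁ ++ l₂) = wlift l₁ * wlift l₂ := by
    intro l₁ l₂; unfold wlift; simp
  have wlift_singleton : ∀ a : G, wlift [a] = ι a := by
    intro a; rw [wlift_cons, wlift_nil, mul_one]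
  have f_ι : ∀ x : G, x ∈ S → f (ι x) = x := by
    intro x hx
    rw [show ι x = FreeGroup.of (e.symm ⟨x, hx⟩) from dif_pos hx, f_of,
      Equiv.apply_symm_apply]
  have f_wlift : ∀ w : List G, (∀ x ∈ w, x ∈ S) → f (wlift w) = w.prod := by
    intro w
    induction w with
    | nil => intro _; simp [wlift_nil]
    | cons a l ih =>
        intro hw
        rw [wlift_cons, map_mul, f_ι a (hw a (by simp)),
          ih (fun x hx => hw x (List.mem_cons_of_mem _ hx)), List.prod_cons]
  have norm_ι : ∀ x : G, (ι x).norm ≤ 1 := by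
    intro x
    by_cases hx : x ∈ S
    · rw [show ι x = FreeGroup.of (e.symm ⟨x, hx⟩) from dif_pos hx]
      simp
    · rw [show ι x = 1 from dif_neg hx]
      simp
  have norm_wlift : ∀ w : List G, (wlift w).norm ≤ w.length := by
    intro w
    induction w with
    | nil => simp [wlift_nil]
    | cons a l ih =>
        rw [wlift_cons]
        calc (ι a * wlift l).norm ≤ (ι a).norm + (wlift l).norm := FreeGroup.norm_mul_le _ _
          _ ≤ 1 + l.length := Nat.add_le_add (norm_ι a) ih
          _ = (a :: l).length := by simp [Nat.add_comm]
  -- the finite set of relators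
  set Rset : Set (FreeGroup (Fin n)) := {ρ | f ρ = 1 ∧ ρ.norm ≤ 2 * K + 2} with hRset
  have hRfin : Rset.Finite := by
    have h1 : {l : List (Fin n × Bool) | l.length ≤ 2 * K + 2}.Finite :=
      List.finite_length_le _ _
    have h2 : (FreeGroup.toWord ⁻¹' {l : List (Fin n × Bool) | l.length ≤ 2 * K + 2}).Finite :=
      h1.preimage (FreeGroup.toWord_injective.injOn)
    exact h2.subset (fun ρ hρ => hρ.2)
  set N : Subgroup (FreeGroup (Fin n)) :=
    Subgroup.normalClosure (↑hRfin.toFinset : Set (FreeGroup (Fin n))) with hN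
  haveI hNnormal : N.Normal := Subgroup.normalClosure_normal
  let π : FreeGroup (Fin n) →* FreeGroup (Fin n) ⧸ N := QuotientGroup.mk' N
  have hπ1 : ∀ ρ : FreeGroup (Fin n), f ρ = 1 → ρ.norm ≤ 2 * K + 2 → π ρ = 1 := by
    intro ρ h1 h2
    have hmem : ρ ∈ N := by
      apply Subgroup.subset_normalClosure
      rw [Set.Finite.coe_toFinset]
      exact ⟨h1, h2⟩
    exact (QuotientGroup.eq_one_iff ρ).mpr hmem
  -- choose combing representatives
  choose c hc1 hc2 using hLsurj
  have hcS : ∀ g : G, ∀ x ∈ c g, x ∈ S := fun g => hLS _ (hc1 g)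
  -- the key lemma: combing paths of neighbouring vertices give equal cosets
  have key : ∀ (g x : G), x ∈ S → π (wlift (c g)) * π (ι x) = π (wlift (c (g * x))) := by
    intro g x hx
    have hAF : AsyncFellow S K (c g) (c (g * x)) := by
      apply hcomb (c g) (hc1 g) (c (g * x)) (hc1 (g * x))
      unfold GenRelated
      exact Or.inr ⟨x, hx, by rw [hc2, hc2]⟩
    unfold AsyncFellow at hAF
    obtain ⟨hh, hmono, h0, hstep, ⟨T, hT⟩, hdist⟩ := hAF
    set v := c g with hv
    set w := c (g * x) with hw
    have hu : ∀ t : ℕ, ∃ u : List G, (∀ y ∈ u, y ∈ S) ∧ u.length ≤ K ∧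
        u.prod = (pathAt v t)⁻¹ * pathAt w (hh t) := fun t => dist_word _ _ K (hdist t)
    choose u huS hulen huprod using hu
    have main : ∀ t : ℕ, π (wlift (v.take t)) * π (wlift (u t)) = π (wlift (w.take (hh t))) := by
      intro t
      induction t with
      | zero =>
          have hu0 : (u 0).prod = 1 := by
            rw [huprod]
            simp [pathAt, h0]
          have hone : π (wlift (u 0)) = 1 := by
            apply hπ1
            · rw [f_wlift _ (huS 0), hu0]
            · exact le_trans (norm_wlift _) (le_trans (hulen 0) (by omega))
          rw [h0]
          simp [wlift_nil, hone]
      | succ t ih =>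
          set rv : List G := (v.take (t + 1)).drop t with hrv
          set rw0 : List G := (w.take (hh (t + 1))).drop (hh t) with hrw0
          have hv_split : v.take (t + 1) = v.take t ++ rv := by
            conv_lhs => rw [← List.take_append_drop t (v.take (t + 1))]
            rw [List.take_take]
            congr 2
            omega
          have hw_split : w.take (hh (t + 1)) = w.take (hh t) ++ rw0 := by
            conv_lhs => rw [← List.take_append_drop (hh t) (w.take (hh (t + 1)))]
            rw [List.take_take]
            congr 2
            have := hmono (show t ≤ t + 1 by omega)
            omega
          have hrvlen : rv.length ≤ 1 := by
            rw [hrv, List.length_drop, List.length_take]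
            omega
          have hrwlen : rw0.length ≤ 1 := by
            rw [hrw0, List.length_drop, List.length_take]
            have := hstep t
            have := hmono (show t ≤ t + 1 by omega)
            omega
          have hrvS : ∀ y ∈ rv, y ∈ S :=
            fun y hy => hcS g y (List.take_subset _ _ (List.drop_subset _ _ hy))
          have hrwS : ∀ y ∈ rw0, y ∈ S :=
            fun y hy => hcS (g * x) y (List.take_subset _ _ (List.drop_subset _ _ hy))
          have hrv_prod : rv.prod = (pathAt v t)⁻¹ * pathAt v (t + 1) := by
            have : (v.take t).prod * rv.prod = (v.take (t + 1)).prod := by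
              rw [hv_split, List.prod_append]
            simp only [pathAt]
            rw [← this]
            group
          have hrw_prod : rw0.prod = (pathAt w (hh t))⁻¹ * pathAt w (hh (t + 1)) := by
            have : (w.take (hh t)).prod * rw0.prod = (w.take (hh (t + 1))).prod := by
              rw [hw_split, List.prod_append]
            simp only [pathAt]
            rw [← this]
            group
          have hf1 : f (wlift rv * wlift (u (t + 1)) * (wlift rw0)⁻¹ * (wlift (u t))⁻¹) = 1 := by
            simp only [map_mul, map_inv]
            rw [f_wlift _ hrvS, f_wlift _ hrwS,
              f_wlift _ (huS (t + 1)), f_wlift _ (huS t), hrv_prod, hrw_prod,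
              huprod (t + 1), huprod t]
            group
          have hnorm : (wlift rv * wlift (u (t + 1)) * (wlift rw0)⁻¹ * (wlift (u t))⁻¹).norm
              ≤ 2 * K + 2 := by
            have h1 := FreeGroup.norm_mul_le (wlift rv * wlift (u (t + 1)) * (wlift rw0)⁻¹)
              (wlift (u t))⁻¹
            have h2 := FreeGroup.norm_mul_le (wlift rv * wlift (u (t + 1))) (wlift rw0)⁻¹
            have h3 := FreeGroup.norm_mul_le (wlift rv) (wlift (u (t + 1)))
            have n1 := le_trans (norm_wlift rv) hrvlen
            have n2 := le_trans (norm_wlift (u (t + 1))) (hulen (t + 1))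
            have n3 := le_trans (norm_wlift rw0) hrwlen
            have n4 := le_trans (norm_wlift (u t)) (hulen t)
            simp only [FreeGroup.norm_inv_eq] at h1 h2
            omega
          have hρmem := hπ1 _ hf1 hnorm
          have hsquare : π (wlift rv) * π (wlift (u (t + 1))) =
              π (wlift (u t)) * π (wlift rw0) := by
            have h1 : π (wlift rv) * π (wlift (u (t + 1))) * (π (wlift rw0))⁻¹ *
                (π (wlift (u t)))⁻¹ = 1 := by
              simpa [map_mul, map_inv] using hρmem
            rw [mul_inv_eq_one] at h1
            rw [mul_inv_eq_iff_eq_mul] at h1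
            exact h1
          calc π (wlift (v.take (t + 1))) * π (wlift (u (t + 1)))
              = π (wlift (v.take t)) * (π (wlift rv) * π (wlift (u (t + 1)))) := by
                rw [hv_split, wlift_append, map_mul, mul_assoc]
            _ = π (wlift (v.take t)) * (π (wlift (u t)) * π (wlift rw0)) := by rw [hsquare]
            _ = (π (wlift (v.take t)) * π (wlift (u t))) * π (wlift rw0) := by rw [mul_assoc]
            _ = π (wlift (w.take (hh t))) * π (wlift rw0) := by rw [ih]
            _ = π (wlift (w.take (hh (t + 1)))) := by rw [hw_split, wlift_append, map_mul]
    -- pass to a large time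
    set t0 := max T v.length with ht0
    have h1 := main t0
    have hvt : v.take t0 = v := List.take_of_length_le (le_max_right _ _)
    have hwt : w.take (hh t0) = w := List.take_of_length_le (hT t0 (le_max_left _ _))
    rw [hvt, hwt] at h1
    have hup : (u t0).prod = x := by
      rw [huprod]
      simp only [pathAt]
      rw [hvt, hwt, hc2, hc2]
      group
    have hrel : π (wlift (u t0)) = π (ι x) := by
      have hf1 : f (wlift (u t0) * (ι x)⁻¹) = 1 := by
        rw [map_mul, map_inv, f_wlift _ (huS t0), hup, f_ι x hx, mul_inv_cancel]
      have hn2 : (wlift (u t0) * (ι x)⁻¹).norm ≤ 2 * K + 2 := by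
        have h2 := FreeGroup.norm_mul_le (wlift (u t0)) (ι x)⁻¹
        have n1 := le_trans (norm_wlift (u t0)) (hulen t0)
        have n2 := norm_ι x
        simp only [FreeGroup.norm_inv_eq] at h2
        omega
      have := hπ1 _ hf1 hn2
      rwa [map_mul, map_inv, mul_inv_eq_one] at this
    rw [← h1, hrel]
  -- words over S representing g are congruent mod N to the combing word for g
  have claimA : ∀ w0 : List G, (∀ x ∈ w0, x ∈ S) →
      π (wlift (c 1)) * π (wlift w0) = π (wlift (c w0.prod)) := by
    intro w0
    induction w0 using List.reverseRecOn with
    | nil => intro _; simp [wlift_nil]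
    | append_singleton l x ih =>
        intro hw
        have hxS : x ∈ S := hw x (by simp)
        have hl : ∀ y ∈ l, y ∈ S := fun y hy => hw y (by simp [hy])
        rw [wlift_append, wlift_singleton, map_mul, ← mul_assoc, ih hl,
          List.prod_append, List.prod_singleton, key l.prod x hxS]
  refine ⟨n, f, hRfin.toFinset, ?_, ?_⟩
  · -- surjectivity
    rw [← MonoidHom.range_eq_top, eq_top_iff, ← hgen, Subgroup.closure_le]
    intro s hs
    exact ⟨FreeGroup.of (e.symm ⟨s, hs⟩), by rw [f_of, Equiv.apply_symm_apply]⟩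
  · -- the kernel is the normal closure of the relators
    apply le_antisymm
    · intro ρ hρ
      have hρ1 : f ρ = 1 := MonoidHom.mem_ker.mp hρ
      set wρ : List G :=
        ρ.toWord.map (fun p => cond p.2 ((e p.1 : G)) ((e p.1 : G))⁻¹) with hwρ
      have hwS : ∀ x ∈ wρ, x ∈ S := by
        intro x hx
        rw [hwρ] at hx
        simp only [List.mem_map] at hx
        obtain ⟨p, _, rfl⟩ := hx
        cases hb : p.2
        · simpa using hsym _ (e p.1).2
        · simpa using (e p.1).2
      have hwprod : wρ.prod = f ρ := by
        conv_rhs => rw [← FreeGroup.mk_toWord (x := ρ)]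
        rw [show f (FreeGroup.mk ρ.toWord) =
          (ρ.toWord.map fun p => cond p.2 ((e p.1 : G)) ((e p.1 : G))⁻¹).prod
          from FreeGroup.lift_mk]
      -- claim B : mod N, any free group element equals the lift of its letter word
      have hhead : ∀ p : Fin n × Bool,
          π (FreeGroup.mk [p]) = π (ι (cond p.2 ((e p.1 : G)) ((e p.1 : G))⁻¹)) := by
        rintro ⟨i, b⟩
        cases b
        · -- inverse letter
          have hmk : FreeGroup.mk [(i, false)] = (FreeGroup.of i)⁻¹ := by
            rw [show FreeGroup.of i = FreeGroup.mk [(i, true)] from rfl, FreeGroup.inv_mk]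
            rfl
          have hxS : ((e i : G))⁻¹ ∈ S := hsym _ (e i).2
          have hι : ι ((e i : G))⁻¹ = FreeGroup.of (e.symm ⟨((e i : G))⁻¹, hxS⟩) :=
            dif_pos hxS
          set j := e.symm ⟨((e i : G))⁻¹, hxS⟩ with hj
          have hej : (e j : G) = ((e i : G))⁻¹ := by
            rw [hj, Equiv.apply_symm_apply]
          have hfrel : f (FreeGroup.of i * FreeGroup.of j) = 1 := by
            rw [map_mul, f_of, f_of, hej, mul_inv_cancel]
          have hnrel : (FreeGroup.of i * FreeGroup.of j).norm ≤ 2 * K + 2 := by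
            have := FreeGroup.norm_mul_le (FreeGroup.of i) (FreeGroup.of j)
            simp only [FreeGroup.norm_of] at this
            omega
          have hπrel := hπ1 _ hfrel hnrel
          rw [map_mul, mul_eq_one_iff_inv_eq] at hπrel
          simp only [cond]
          rw [hmk, map_inv, hι, hπrel]
        · simp only [cond]
          have hxS : (e i : G) ∈ S := (e i).2
          have hι : ι (e i : G) = FreeGroup.of (e.symm ⟨(e i : G), hxS⟩) :=
            dif_pos hxS
          have : e.symm ⟨(e i : G), hxS⟩ = i := by
            rw [show (⟨(e i : G), hxS⟩ : S) = e i from rfl, Equiv.symm_apply_apply]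
          rw [hι, this]
          rfl
      have claimB : ∀ l : List (Fin n × Bool),
          π (FreeGroup.mk l) =
            π (wlift (l.map (fun p => cond p.2 ((e p.1 : G)) ((e p.1 : G))⁻¹))) := by
        intro l
        induction l with
        | nil =>
            rw [show FreeGroup.mk ([] : List (Fin n × Bool)) = 1 from rfl]
            simp [wlift_nil]
        | cons p l ih =>
            have hsplit : FreeGroup.mk (p :: l) = FreeGroup.mk [p] * FreeGroup.mk l := by
              rw [FreeGroup.mul_mk]
              rfl
            rw [hsplit, map_mul, ih, hhead p, List.map_cons, wlift_cons, map_mul]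
      have hπρ : π ρ = 1 := by
        have hB : π ρ = π (wlift wρ) := by
          conv_lhs => rw [← FreeGroup.mk_toWord (x := ρ)]
          exact claimB ρ.toWord
        have hA := claimA wρ hwS
        rw [hwprod, hρ1] at hA
        have : π (wlift wρ) = 1 := by
          have := hA
          rwa [mul_eq_left] at this
        rw [hB, this]
      exact (QuotientGroup.eq_one_iff ρ).mp hπρ
    · apply Subgroup.normalClosure_le_normal
      intro ρ hρ
      have : ρ ∈ Rset := by
        rwa [← Set.Finite.mem_toFinset hRfin]
      exact this.1
end

section
/- The language of even-length palindromes {ww^R : w a word over {a,b}} is not accepted by any deterministic pushdown automaton, i.e., it is not deterministic context-free. -/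
/-- A deterministic pushdown automaton over input alphabet `α` with stack
alphabet `Γ` and state set `σ`.  For each state and top stack symbol, the
machine either performs an ε-move (popping the top symbol and pushing a string,
without reading input) or, depending on the next input symbol, performs a
reading move (or gets stuck if `none`).  This built-in dichotomy is exactly the
determinism condition for pushdown automata. -/
structure DPDA (α Γ σ : Type) where
  /-- the start state -/
  start : σ
  /-- the initial stack symbol -/
  startSym : Γ
  /-- the accept states -/
  accept : σ → Prop
  /-- the transition function: given the current state and top stack symbol,
  either an ε-move (new state, string pushed in place of the top symbol) or
  a function giving, for each possible input symbol read, the move (if any) -/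
  step : σ → Γ → (σ × List Γ) ⊕ (α → Option (σ × List Γ))

namespace DPDA

variable {α Γ σ : Type} (M : DPDA α Γ σ)

/-- Reachability between configurations (state, remaining input, stack). -/
inductive Reaches : σ × List α × List Γ → σ × List α × List Γ → Prop
  | refl (c : σ × List α × List Γ) : Reaches c c
  | eps {q : σ} {Z : Γ} {w : List α} {s : List Γ} {q' : σ} {γ : List Γ}
      {c : σ × List α × List Γ} :
      M.step q Z = Sum.inl (q', γ) → Reaches (q', w, γ ++ s) c →
      Reaches (q, w, Z :: s) c
  | read {q : σ} {Z : Γ} {a : α} {w : List α} {s : List Γ} {q' : σ} {γ : List Γ}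
      {f : α → Option (σ × List Γ)} {c : σ × List α × List Γ} :
      M.step q Z = Sum.inr f → f a = some (q', γ) → Reaches (q', w, γ ++ s) c →
      Reaches (q, a :: w, Z :: s) c

/-- The language accepted by the deterministic pushdown automaton: all input
words which, when completely read, can bring the machine to an accept state. -/
def accepts : Set (List α) :=
  {w | ∃ (q : σ) (s : List Γ),
    M.Reaches (M.start, w, [M.startSym]) (q, [], s) ∧ M.accept q}

end DPDA

/-- The two-letter alphabet {a, b}. -/
inductive ABLetter : Type
  | a : ABLetter
  | b : ABLetter
  deriving DecidableEq

instance : Fintype ABLetter :=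
  ⟨{ABLetter.a, ABLetter.b}, by intro x; cases x <;> simp⟩

namespace PalNotDet
open DPDA

variable {α Γ σ : Type}

def stepFn (M : DPDA α Γ σ) : σ × List α × List Γ → Option (σ × List α × List Γ)
  | (q, w, []) => (fun _ => none) (q, w)
  | (q, w, Z :: s) =>
    match M.step q Z with
    | Sum.inl (q', γ) => some (q', w, γ ++ s)
    | Sum.inr f =>
      match w with
      | [] => none
      | a :: w' =>
        match f a with
        | none => none
        | some (q', γ) => some (q', w', γ ++ s)

def iter (M : DPDA α Γ σ) : ℕ → σ × List α × List Γ → Option (σ × List α × List Γ)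
  | 0, c => some c
  | n + 1, c => (stepFn M c).bind (iter M n)

variable {M : DPDA α Γ σ}

lemma stepFn_nil (q : σ) (w : List α) : stepFn M (q, w, ([] : List Γ)) = none := rfl

lemma stepFn_inl {q : σ} {Z : Γ} {q' : σ} {γ : List Γ} (h : M.step q Z = Sum.inl (q', γ))
    (w : List α) (s : List Γ) : stepFn M (q, w, Z :: s) = some (q', w, γ ++ s) := by
  simp [stepFn, h]

lemma stepFn_inr {q : σ} {Z : Γ} {f : α → Option (σ × List Γ)} {q' : σ} {γ : List Γ}
    (h : M.step q Z = Sum.inr f) {a : α} (hfa : f a = some (q', γ))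
    (w : List α) (s : List Γ) : stepFn M (q, a :: w, Z :: s) = some (q', w, γ ++ s) := by
  simp [stepFn, h, hfa]

/-- inversion for a successful step -/
lemma stepFn_some_inv {q : σ} {w : List α} {s : List Γ} {c : σ × List α × List Γ}
    (h : stepFn M (q, w, s) = some c) :
    ∃ Z s₀ γ, s = Z :: s₀ ∧ c.2.2 = γ ++ s₀ ∧
      ((M.step q Z = Sum.inl (c.1, γ) ∧ c.2.1 = w) ∨
       (∃ f a, M.step q Z = Sum.inr f ∧ f a = some (c.1, γ) ∧ w = a :: c.2.1)) := by
  rcases s with _ | ⟨Z, s₀⟩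
  · simp [stepFn] at h
  rcases hst : M.step q Z with ⟨q', γ⟩ | f
  · rw [stepFn_inl hst] at h
    injection h with h; subst h
    exact ⟨Z, s₀, γ, rfl, rfl, Or.inl ⟨hst, rfl⟩⟩
  · rcases w with _ | ⟨a, w'⟩
    · simp [stepFn, hst] at h
    rcases hfa : f a with _ | ⟨q', γ⟩
    · simp [stepFn, hst, hfa] at h
    · rw [stepFn_inr hst hfa] at h
      injection h with h; subst h
      exact ⟨Z, s₀, γ, rfl, rfl, Or.inr ⟨f, a, hst, hfa, rfl⟩⟩

lemma iter_zero (c : σ × List α × List Γ) : iter M 0 c = some c := rfl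

lemma iter_succ (n : ℕ) (c : σ × List α × List Γ) :
    iter M (n + 1) c = (stepFn M c).bind (iter M n) := rfl

lemma iter_add (m n : ℕ) (c : σ × List α × List Γ) :
    iter M (m + n) c = (iter M m c).bind (iter M n) := by
  induction m generalizing c with
  | zero => simp [iter_zero]
  | succ m ih =>
    rw [Nat.succ_add, iter_succ, iter_succ]
    rcases h : stepFn M c with _ | c'
    · simp
    · simp [ih]

lemma iter_sub {a b : ℕ} {c d e : σ × List α × List Γ} (hab : a ≤ b)
    (ha : iter M a c = some d) (hb : iter M b c = some e) : iter M (b - a) d = some e := by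
  rw [← Nat.add_sub_cancel' hab, iter_add, ha] at hb
  simpa using hb

lemma iter_some_of_le {a b : ℕ} {c e : σ × List α × List Γ} (hab : a ≤ b)
    (hb : iter M b c = some e) : ∃ d, iter M a c = some d := by
  rw [← Nat.add_sub_cancel' hab, iter_add] at hb
  rcases h : iter M a c with _ | d
  · rw [h] at hb; simp at hb
  · exact ⟨d, rfl⟩

lemma reaches_of_iter {n : ℕ} {c d : σ × List α × List Γ} (h : iter M n c = some d) :
    M.Reaches c d := by
  induction n generalizing c with
  | zero => simp [iter_zero] at h; exact h ▸ Reaches.refl c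
  | succ n ih =>
    rw [iter_succ] at h
    rcases hs : stepFn M c with _ | c'
    · rw [hs] at h; simp at h
    rw [hs] at h; simp at h
    obtain ⟨q, w, s⟩ := c
    obtain ⟨Z, s₀, γ, hsk, hck, hor⟩ := stepFn_some_inv hs
    rcases hor with ⟨hstep, hw⟩ | ⟨f, a, hstep, hfa, hw⟩
    · subst hsk
      have hc' : c' = (c'.1, w, γ ++ s₀) := by
        obtain ⟨x, y, z⟩ := c'; simp at hck hw ⊢; exact ⟨hw, hck⟩
      exact Reaches.eps hstep (by rw [← hc']; exact ih h)
    · subst hsk; subst hw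
      have hc' : c' = (c'.1, c'.2.1, γ ++ s₀) := by
        obtain ⟨x, y, z⟩ := c'; simp at hck ⊢; exact hck
      exact Reaches.read hstep hfa (by rw [← hc']; exact ih h)

lemma iter_of_reaches {c d : σ × List α × List Γ} (h : M.Reaches c d) :
    ∃ n, iter M n c = some d := by
  induction h with
  | refl c => exact ⟨0, rfl⟩
  | eps hstep _ ih =>
    obtain ⟨n, hn⟩ := ih
    exact ⟨n + 1, by rw [iter_succ, stepFn_inl hstep]; simpa using hn⟩
  | read hstep hfa _ ih =>
    obtain ⟨n, hn⟩ := ih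
    exact ⟨n + 1, by rw [iter_succ, stepFn_inr hstep hfa]; simpa using hn⟩

lemma Reaches.trans' {c d e : σ × List α × List Γ} (h1 : M.Reaches c d) (h2 : M.Reaches d e) :
    M.Reaches c e := by
  induction h1 with
  | refl => exact h2
  | eps hstep _ ih => exact DPDA.Reaches.eps hstep (ih h2)
  | read hstep hfa _ ih => exact DPDA.Reaches.read hstep hfa (ih h2)

/-- replay: along a successful run, the consumed input is a prefix and the run only
depends on the consumed part. -/
lemma iter_input : ∀ (n : ℕ) (q : σ) (w : List α) (s : List Γ) (c : σ × List α × List Γ),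
    iter M n (q, w, s) = some c →
    ∃ d, w = d ++ c.2.1 ∧ ∀ v, iter M n (q, d ++ v, s) = some (c.1, v, c.2.2) := by
  intro n
  induction n with
  | zero =>
    intro q w s c h
    rw [iter_zero] at h; injection h with h; subst h
    exact ⟨[], rfl, fun v => rfl⟩
  | succ n ih =>
    intro q w s c h
    rw [iter_succ] at h
    rcases hs : stepFn M (q, w, s) with _ | c₁
    · rw [hs] at h; simp at h
    rw [hs] at h; simp at h
    obtain ⟨q₁, w₁, s₁⟩ := c₁
    obtain ⟨d₁, hw₁, hrep₁⟩ := ih q₁ w₁ s₁ c h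
    obtain ⟨Z, s₀, γ, hsk, hck, hor⟩ := stepFn_some_inv hs
    simp at hck
    rcases hor with ⟨hstep, hw⟩ | ⟨f, a, hstep, hfa, hw⟩
    · simp at hstep hw
      subst hsk; subst hck; subst hw
      refine ⟨d₁, hw₁, fun v => ?_⟩
      rw [iter_succ, stepFn_inl hstep]
      simpa using hrep₁ v
    · simp at hfa hw
      subst hsk; subst hck; subst hw
      refine ⟨a :: d₁, by simp [hw₁], fun v => ?_⟩
      rw [List.cons_append, iter_succ, stepFn_inr hstep hfa]
      simpa using hrep₁ v

/-- a run is insensitive to extra stack below. -/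
lemma step_append {q : σ} {w : List α} {x : List Γ} {c : σ × List α × List Γ}
    (h : stepFn M (q, w, x) = some c) (t : List Γ) :
    stepFn M (q, w, x ++ t) = some (c.1, c.2.1, c.2.2 ++ t) := by
  obtain ⟨Z, s₀, γ, hsk, hck, hor⟩ := stepFn_some_inv h
  subst hsk
  rcases hor with ⟨hstep, hw⟩ | ⟨f, a, hstep, hfa, hw⟩
  · rw [List.cons_append, stepFn_inl hstep, hck, ← hw]
    simp
  · rw [List.cons_append, hw, stepFn_inr hstep hfa, hck]
    simp

lemma iter_append : ∀ (n : ℕ) (q : σ) (w : List α) (x : List Γ) (c : σ × List α × List Γ),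
    iter M n (q, w, x) = some c → ∀ t : List Γ,
    iter M n (q, w, x ++ t) = some (c.1, c.2.1, c.2.2 ++ t) := by
  intro n
  induction n with
  | zero =>
    intro q w x c h t
    rw [iter_zero] at h; injection h with h; subst h; rfl
  | succ n ih =>
    intro q w x c h t
    rw [iter_succ] at h
    rcases hs : stepFn M (q, w, x) with _ | c₁
    · rw [hs] at h; simp at h
    rw [hs] at h; simp at h
    rw [iter_succ, step_append hs t]
    obtain ⟨q₁, w₁, s₁⟩ := c₁
    simpa using ih q₁ w₁ s₁ c h t

lemma step_strip {q : σ} {w : List α} {x t : List Γ} {c : σ × List α × List Γ}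
    (h : stepFn M (q, w, x ++ t) = some c) (hx : x ≠ []) :
    ∃ y, c = (c.1, c.2.1, y ++ t) ∧ stepFn M (q, w, x) = some (c.1, c.2.1, y) := by
  rcases x with _ | ⟨Z, x₀⟩
  · exact absurd rfl hx
  rw [List.cons_append] at h
  obtain ⟨Z', s₀, γ, hsk, hck, hor⟩ := stepFn_some_inv h
  injection hsk with hZ hs₀; subst hZ; subst hs₀
  rcases hor with ⟨hstep, hw⟩ | ⟨f, a, hstep, hfa, hw⟩
  · refine ⟨γ ++ x₀, ?_, ?_⟩
    · obtain ⟨c1, c2, c3⟩ := c; simp at hck ⊢; simp [hck]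
    · rw [stepFn_inl hstep, ← hw]
  · refine ⟨γ ++ x₀, ?_, ?_⟩
    · obtain ⟨c1, c2, c3⟩ := c; simp at hck ⊢; simp [hck]
    · rw [hw, stepFn_inr hstep hfa]

/-- stripping an untouched stack suffix from a run -/
lemma iter_strip : ∀ (n : ℕ) (q : σ) (w : List α) (x t : List Γ) (c : σ × List α × List Γ),
    iter M n (q, w, x ++ t) = some c →
    (∀ j c', j ≤ n → iter M j (q, w, x ++ t) = some c' → t.length < c'.2.2.length) →
    ∃ y, c = (c.1, c.2.1, y ++ t) ∧ iter M n (q, w, x) = some (c.1, c.2.1, y) := by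
  intro n
  induction n with
  | zero =>
    intro q w x t c h hcond
    rw [iter_zero] at h; injection h with h; subst h
    exact ⟨x, rfl, rfl⟩
  | succ n ih =>
    intro q w x t c h hcond
    have hx : x ≠ [] := by
      have := hcond 0 (q, w, x ++ t) (Nat.zero_le _) rfl
      simp at this
      intro hx0; rw [hx0] at this; simp at this
    rw [iter_succ] at h
    rcases hs : stepFn M (q, w, x ++ t) with _ | c₁
    · rw [hs] at h; simp at h
    rw [hs] at h; simp at h
    obtain ⟨y₁, hc₁, hs'⟩ := step_strip hs hx
    rw [hc₁] at h
    obtain ⟨y, hcy, hiter⟩ := ih c₁.1 c₁.2.1 y₁ t c h (by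
      intro j c' hj hj'
      refine hcond (j + 1) c' (Nat.succ_le_succ hj) ?_
      rw [iter_succ, hs]
      simpa [← hc₁] using hj')
    refine ⟨y, hcy, ?_⟩
    rw [iter_succ, hs']
    simpa using hiter

/-- length of the pushed string of a potential transition -/
def pushLen [Fintype α] : (σ × List Γ) ⊕ (α → Option (σ × List Γ)) → ℕ
  | Sum.inl (_, γ) => γ.length
  | Sum.inr f => Finset.univ.sup fun a : α => ((f a).map fun p => p.2.length).getD 0

/-- maximal number of symbols pushed in one step -/
def KBound (M : DPDA α Γ σ) [Fintype α] [Fintype Γ] [Fintype σ] : ℕ :=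
  Finset.univ.sup fun p : σ × Γ => pushLen (M.step p.1 p.2)

lemma step_height [Fintype α] [Fintype Γ] [Fintype σ] {q : σ} {w : List α} {s : List Γ}
    {c : σ × List α × List Γ} (h : stepFn M (q, w, s) = some c) :
    c.2.2.length + 1 ≤ s.length + KBound M := by
  obtain ⟨Z, s₀, γ, hsk, hck, hor⟩ := stepFn_some_inv h
  subst hsk
  have hK : pushLen (M.step q Z) ≤ KBound M :=
    Finset.le_sup (f := fun p : σ × Γ => pushLen (M.step p.1 p.2)) (Finset.mem_univ (q, Z))
  have hγ : γ.length ≤ pushLen (M.step q Z) := by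
    rcases hor with ⟨hstep, _⟩ | ⟨f, a, hstep, hfa, _⟩
    · simp [hstep, pushLen]
    · rw [hstep]
      have : γ.length = ((f a).map fun p : σ × List Γ => p.2.length).getD 0 := by
        rw [hfa]; rfl
      rw [this]
      exact Finset.le_sup (f := fun a : α => ((f a).map fun p => p.2.length).getD 0)
        (Finset.mem_univ a)
  rw [hck]
  simp only [List.length_append, List.length_cons]
  omega


lemma mid_quot {M : DPDA α Γ σ} {z P v : List α} {n : ℕ} {q : σ} {s : List Γ}
    (hrun : iter M n (M.start, z, [M.startSym]) = some (q, v, s)) (hz : z = P ++ v)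
    {u : List α} (hu : u ≠ []) :
    (P ++ u) ∈ M.accepts ↔ ∃ k qf sf, iter M k (q, u, s) = some (qf, [], sf) ∧ M.accept qf := by
  obtain ⟨d, hd, hrep⟩ := iter_input n M.start z [M.startSym] (q, v, s) hrun
  simp only at hd hrep
  have hdP : d = P := by
    have h2 : d ++ v = P ++ v := by rw [← hd, hz]
    exact List.append_cancel_right h2
  subst hdP
  constructor
  · rintro ⟨q₁, s₁, hre, hq₁⟩
    obtain ⟨k₁, hk₁⟩ := iter_of_reaches hre
    rcases le_or_gt n k₁ with hle | hlt
    · exact ⟨k₁ - n, q₁, s₁, iter_sub hle (hrep u) hk₁, hq₁⟩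
    · exfalso
      have h2 := iter_sub (le_of_lt hlt) hk₁ (hrep u)
      obtain ⟨d₂, hd₂, -⟩ := iter_input _ _ _ _ _ h2
      simp only at hd₂
      have : u = [] := (List.append_eq_nil_iff.mp hd₂.symm).2
      exact hu this
  · rintro ⟨k, qf, sf, hk, hqf⟩
    refine ⟨qf, sf, ?_, hqf⟩
    apply reaches_of_iter (n := n + k)
    rw [iter_add, hrep u]
    simpa using hk

lemma finite_len_le (Γ : Type) [Fintype Γ] (D : ℕ) : {l : List Γ | l.length ≤ D}.Finite := by
  induction D with
  | zero =>
    have : {l : List Γ | l.length ≤ 0} ⊆ {[]} := by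
      intro l hl; simp at hl ⊢; exact hl
    exact (Set.finite_singleton _).subset this
  | succ D ih =>
    have hsub : {l : List Γ | l.length ≤ D + 1} ⊆
        insert [] (Set.image2 (· :: ·) Set.univ {l : List Γ | l.length ≤ D}) := by
      rintro (_ | ⟨x, l⟩) hl
      · exact Set.mem_insert _ _
      · have hl' : l.length ≤ D := by simpa using hl
        exact Set.mem_insert_iff.mpr (Or.inr ⟨x, trivial, l, hl', rfl⟩)
    exact ((Set.finite_univ.image2 _ ih).insert _).subset hsub

def Pal (u : List ABLetter) : Prop := ∃ w : List ABLetter, u = w ++ w.reverse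

lemma pal_reverse {u : List ABLetter} (h : Pal u) : u.reverse = u := by
  obtain ⟨w, rfl⟩ := h; simp

lemma pal_mark (P : List ABLetter) (x : ABLetter) :
    Pal (P ++ (x :: x :: P.reverse)) :=
  ⟨P ++ [x], by simp⟩

def leadA (u : List ABLetter) : ℕ := (u.takeWhile fun x => decide (x = ABLetter.a)).length

lemma leadA_rep (n : ℕ) : leadA (List.replicate n ABLetter.a) = n := by
  induction n with
  | zero => rfl
  | succ n ih => simpa [leadA, List.replicate_succ, List.takeWhile_cons] using ih

lemma leadA_rep_b (n : ℕ) (rest : List ABLetter) :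
    leadA (List.replicate n ABLetter.a ++ ABLetter.b :: rest) = n := by
  induction n with
  | zero => simp [leadA, List.takeWhile_cons]
  | succ n ih => simpa [leadA, List.replicate_succ, List.takeWhile_cons] using ih

lemma quot_inj_aux {P P' : List ABLetter} (hlen : P'.length ≤ P.length)
    (h : ∀ u : List ABLetter, u ≠ [] → (Pal (P ++ u) ↔ Pal (P' ++ u))) : P = P' := by
  have hb : Pal (P' ++ (ABLetter.b :: ABLetter.b :: P.reverse)) :=
    (h _ (by simp)).mp (pal_mark P ABLetter.b)
  have ha : Pal (P' ++ (ABLetter.a :: ABLetter.a :: P.reverse)) :=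
    (h _ (by simp)).mp (pal_mark P ABLetter.a)
  have E1 := pal_reverse hb
  have E2 := pal_reverse ha
  simp only [List.reverse_append, List.reverse_cons, List.reverse_reverse, List.append_assoc,
    List.nil_append, List.cons_append, List.append_nil] at E1 E2
  -- now hopefully E1 : P ++ ABLetter.b :: ABLetter.b :: P'.reverse = P' ++ ABLetter.b :: ABLetter.b :: P.reverse
  rcases eq_or_lt_of_le hlen with heq | hlt
  · exact (List.append_inj E1 (by simp [heq])).1
  · exfalso
    have g1 := congrArg (fun l => l[P'.length]?) E1
    have g2 := congrArg (fun l => l[P'.length]?) E2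
    simp only [List.getElem?_append_right (le_refl P'.length),
      List.getElem?_append_left hlt, Nat.sub_self] at g1 g2
    simp at g1 g2
    rw [g2] at g1
    exact absurd g1 (by simp)

lemma quot_inj {P P' : List ABLetter}
    (h : ∀ u : List ABLetter, u ≠ [] → (Pal (P ++ u) ↔ Pal (P' ++ u))) : P = P' := by
  rcases le_total P'.length P.length with hle | hle
  · exact quot_inj_aux hle h
  · exact (quot_inj_aux hle fun u hu => (h u hu).symm).symm

def repA (n : ℕ) : List ABLetter := List.replicate n ABLetter.a

def zw (N : ℕ) : List ABLetter := repA N ++ [ABLetter.b, ABLetter.b] ++ repA N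

lemma zw_len (N : ℕ) : (zw N).length = 2 * N + 2 := by simp [zw, repA]; ring

lemma zw_pal (N : ℕ) : Pal (zw N) :=
  ⟨repA N ++ [ABLetter.b], by simp [zw, repA]⟩

lemma take_zw {c N : ℕ} (h : c ≤ N) : (zw N).take c = repA c := by
  rw [zw, List.append_assoc, List.take_append_of_le_length (by simp [repA]; omega)]
  simp [repA, List.take_replicate, Nat.min_eq_left h]

lemma drop_zw {c N : ℕ} (h : c ≤ N) :
    (zw N).drop c = repA (N - c) ++ ([ABLetter.b, ABLetter.b] ++ repA N) := by
  rw [zw, List.append_assoc, List.drop_append_of_le_length (by simp [repA]; omega)]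
  simp [repA]

lemma leadA_take_zw {c N : ℕ} (h : N ≤ c) : leadA ((zw N).take c) = N := by
  rw [zw, List.append_assoc, List.take_append,
    List.take_of_length_le (by simp [repA]; omega)]
  have hlen : (repA N).length = N := by simp [repA]
  rw [hlen]
  rcases Nat.eq_zero_or_pos (c - N) with h0 | hpos
  · rw [h0]
    simp [repA, leadA_rep]
  · obtain ⟨e, he⟩ := Nat.exists_eq_succ_of_ne_zero (Nat.pos_iff_ne_zero.mp hpos)
    rw [he]
    have h2 : ([ABLetter.b, ABLetter.b] ++ repA N).take (e + 1)
        = ABLetter.b :: (ABLetter.b :: repA N).take e := rfl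
    rw [h2, repA]
    exact leadA_rep_b _ _

lemma repA_merge (a b : ℕ) (X : List ABLetter) :
    repA a ++ (repA b ++ X) = repA (a + b) ++ X := by
  simp [repA, ← List.append_assoc, ← List.replicate_add]

lemma pal_abba {m n : ℕ} (h : Pal (repA m ++ ([ABLetter.b, ABLetter.b] ++ repA n))) :
    m = n := by
  have hr := pal_reverse h
  have e1 : (repA m ++ ([ABLetter.b, ABLetter.b] ++ repA n)).reverse
      = repA n ++ (ABLetter.b :: ABLetter.b :: repA m) := by
    simp [repA, List.reverse_append]
  rw [e1] at hr
  have h2 := congrArg leadA hr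
  rw [repA, repA] at h2
  have h3 : leadA (List.replicate n ABLetter.a ++ ABLetter.b :: ABLetter.b :: List.replicate m ABLetter.a) = n := leadA_rep_b _ _
  have h4 : leadA (List.replicate m ABLetter.a ++ ([ABLetter.b, ABLetter.b] ++ List.replicate n ABLetter.a)) = m := leadA_rep_b _ _
  rw [h3, h4] at h2
  exact h2.symm



lemma iter_input' {n : ℕ} {c c' : σ × List α × List Γ} (h : iter M n c = some c') :
    ∃ d, c.2.1 = d ++ c'.2.1 ∧ ∀ v, iter M n (c.1, d ++ v, c.2.2) = some (c'.1, v, c'.2.2) := by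
  obtain ⟨q, w, s⟩ := c
  exact iter_input n q w s c' h

end PalNotDet

open PalNotDet

/-- The language of even-length palindromes over {a,b} is not accepted by any
deterministic pushdown automaton, i.e. it is not deterministic context-free. -/
theorem palindromes_not_deterministic_contextFree :
    ¬ ∃ (Γ σ : Type) (_ : Fintype Γ) (_ : Fintype σ) (M : DPDA ABLetter Γ σ),
      M.accepts = {u : List ABLetter | ∃ w : List ABLetter, u = w ++ w.reverse} := by
  rintro ⟨Γ, σ, hFΓ, hFσ, M, hacc⟩
  haveI := hFΓ; haveI := hFσ
  classical
  have hmem : ∀ u : List ABLetter, u ∈ M.accepts ↔ Pal u := by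
    intro u; rw [hacc]; rfl
  -- an accepting run for every word aᴺbbaᴺ
  have hzacc : ∀ N : ℕ, ∃ (T : ℕ) (qf : σ) (sf : List Γ),
      iter M T (M.start, zw N, [M.startSym]) = some (qf, [], sf) ∧ M.accept qf := by
    intro N
    obtain ⟨qf, sf, hre, hqf⟩ := (hmem _).mpr (zw_pal N)
    obtain ⟨T, hT⟩ := iter_of_reaches hre
    exact ⟨T, qf, sf, hT, hqf⟩
  choose T qf sf hT hqf using hzacc
  set K := KBound M with hKdef
  set C := Fintype.card σ * (Fintype.card Γ + 1) with hCdef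
  set D := (C + 1) * (K + 1) + K + 3 with hDdef
  -- configurations with a low stack reached after consuming at least N letters
  set Wit : ℕ → σ × List Γ → Prop := fun N p =>
    ∃ n v P, iter M n (M.start, zw N, [M.startSym]) = some (p.1, v, p.2) ∧
      zw N = P ++ v ∧ N ≤ P.length ∧ p.2.length ≤ D with hWit
  have hinj : ∀ N N' p, Wit N p → Wit N' p → N = N' := by
    intro N N' p hw1 hw2
    simp only [hWit] at hw1 hw2
    obtain ⟨n, v, P, hrun, hz, hNP, -⟩ := hw1
    obtain ⟨n', v', P', hrun', hz', hNP', -⟩ := hw2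
    have hqu : ∀ u : List ABLetter, u ≠ [] → (Pal (P ++ u) ↔ Pal (P' ++ u)) := by
      intro u hu
      rw [← hmem, ← hmem, mid_quot hrun hz hu, mid_quot hrun' hz' hu]
    have hPP : P = P' := quot_inj hqu
    have h1 : leadA P = N := by
      have hPt : P = (zw N).take P.length := by rw [hz, List.take_left]
      rw [hPt]; exact leadA_take_zw hNP
    have h2 : leadA P' = N' := by
      have hPt : P' = (zw N').take P'.length := by rw [hz', List.take_left]
      rw [hPt]; exact leadA_take_zw hNP'
    rw [← h1, ← h2, hPP]
  -- the set of N admitting such a low configuration is finite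
  have hfin : {N : ℕ | ∃ p, Wit N p}.Finite := by
    set g : ℕ → σ × List Γ := fun N => if h : ∃ p, Wit N p then h.choose else (M.start, []) with hg
    have hgw : ∀ N, (∃ p, Wit N p) → Wit N (g N) := by
      intro N h
      simp only [hg, dif_pos h]
      exact h.choose_spec
    apply Set.Finite.of_finite_image (f := g)
    · apply Set.Finite.subset (Set.finite_univ.prod (finite_len_le Γ D))
      rintro x ⟨N, hN, rfl⟩
      have hw := hgw N hN
      simp only [hWit] at hw
      obtain ⟨n, v, P, -, -, -, hlen⟩ := hw
      exact ⟨trivial, hlen⟩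
    · intro N hN N' hN' hgg
      exact hinj N N' (g N) (hgw N hN) (hgg ▸ hgw N' hN')
  -- pick a positive N with no low configuration
  obtain ⟨N, hNmem⟩ := ((Set.Ioi_infinite 0).diff hfin).nonempty
  have hN0 : 0 < N := hNmem.1
  have hNlow : ¬ ∃ p, Wit N p := hNmem.2
  -- the accepting run on aᴺbbaᴺ
  set Tn := T N with hTndef
  set ρ : ℕ → σ × List ABLetter × List Γ :=
    fun j => (iter M j (M.start, zw N, [M.startSym])).getD (M.start, [], []) with hρdef
  have hρ : ∀ j, j ≤ Tn → iter M j (M.start, zw N, [M.startSym]) = some (ρ j) := by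
    intro j hj
    obtain ⟨d, hd⟩ := iter_some_of_le hj (hT N)
    simp [hρdef, hd]
  have hρ0 : ρ 0 = (M.start, zw N, [M.startSym]) := by simp [hρdef, iter_zero]
  have hρT : ρ Tn = (qf N, [], sf N) := by simp [hρdef, hTndef, hT N]
  have hstepρ : ∀ j, j < Tn → stepFn M (ρ j) = some (ρ (j + 1)) := by
    intro j hj
    have h1 := hρ j (le_of_lt hj)
    have h2 := hρ (j + 1) hj
    have h3 := iter_sub (Nat.le_succ j) h1 h2
    have h4 : j + 1 - j = 1 := by omega
    rw [h4] at h3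
    rcases hs : stepFn M (ρ j) with _ | c
    · rw [iter_succ, hs] at h3; simp at h3
    · rw [iter_succ, hs] at h3
      simpa [iter_zero] using h3
  have hseg : ∀ j k, j ≤ k → k ≤ Tn → iter M (k - j) (ρ j) = some (ρ k) :=
    fun j k hjk hk => iter_sub hjk (hρ j (le_trans hjk hk)) (hρ k hk)
  -- consumed prefixes
  have hpre : ∀ j, j ≤ Tn → ∃ d : List ABLetter, zw N = d ++ (ρ j).2.1 ∧
      ∀ v, iter M j (M.start, d ++ v, [M.startSym]) = some ((ρ j).1, v, (ρ j).2.2) := by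
    intro j hj
    obtain ⟨d, hd, hrep⟩ := iter_input' (hρ j hj)
    exact ⟨d, hd, hrep⟩
  -- the input shrinks along the run, one letter at a time
  have hlen_step : ∀ j, j < Tn → (ρ j).2.1.length ≤ (ρ (j + 1)).2.1.length + 1 ∧
      (ρ (j + 1)).2.1.length ≤ (ρ j).2.1.length := by
    intro j hj
    rcases hr : ρ j with ⟨q, w, s⟩
    have hs := hstepρ j hj
    rw [hr] at hs
    obtain ⟨Z, s₀, γ, -, -, hor⟩ := stepFn_some_inv hs
    rcases hor with ⟨-, hw⟩ | ⟨f, a, -, -, hw⟩ <;> rw [hw] <;> simp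
  have hlen_mono : ∀ j k, j ≤ k → k ≤ Tn → (ρ k).2.1.length ≤ (ρ j).2.1.length := by
    intro j k hjk hk
    obtain ⟨d, hd, -⟩ := iter_input' (hseg j k hjk hk)
    rw [hd]; simp
  have hzlen : (zw N).length = 2 * N + 2 := zw_len N
  -- the first time at which N letters have been consumed
  have hexists : ∃ j, (ρ j).2.1.length + N ≤ (zw N).length := by
    refine ⟨Tn, ?_⟩
    have h0 : (ρ Tn).2.1.length = 0 := by simp [hρT]
    omega
  set tstar := Nat.find hexists with htstar
  have htsp : (ρ tstar).2.1.length + N ≤ (zw N).length := Nat.find_spec hexists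
  have htsmin : ∀ j, j < tstar → ¬ ((ρ j).2.1.length + N ≤ (zw N).length) :=
    fun j hj => Nat.find_min hexists hj
  have htsT : tstar ≤ Tn := by
    apply Nat.find_le
    have h0 : (ρ Tn).2.1.length = 0 := by simp [hρT]
    omega
  have hts0 : 0 < tstar := by
    rcases Nat.eq_zero_or_pos tstar with h0 | h
    · exfalso
      have h1 : (ρ 0).2.1.length = (zw N).length := by simp [hρ0]
      rw [h0] at htsp
      omega
    · exact h
  have htsexact : (ρ tstar).2.1.length + N = (zw N).length := by
    have h1 := htsmin (tstar - 1) (by omega)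
    have h2 := hlen_step (tstar - 1) (by omega)
    have h3 : tstar - 1 + 1 = tstar := by omega
    rw [h3] at h2
    omega
  -- after time tstar the stack is always high
  have hHigh : ∀ j, tstar ≤ j → j ≤ Tn → D < (ρ j).2.2.length := by
    intro j hjs hj
    by_contra hle
    refine hNlow ⟨((ρ j).1, (ρ j).2.2), ?_⟩
    simp only [hWit]
    obtain ⟨d, hd, -⟩ := hpre j hj
    refine ⟨j, (ρ j).2.1, d, ?_, hd, ?_, by omega⟩
    · exact hρ j hj
    · have h5 : d.length + (ρ j).2.1.length = (zw N).length := by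
        have hlen2 := congrArg List.length hd
        rw [List.length_append] at hlen2
        omega
      have h4 := hlen_mono tstar j hjs hj
      omega
  -- last times below each level
  have hU : ∀ ℓ : ℕ, ∃ uℓ, 1 ≤ ℓ → ℓ ≤ D →
      uℓ ≤ Tn ∧ uℓ < tstar ∧ (ρ uℓ).2.2.length ≤ ℓ ∧
      ∀ j, j ≤ Tn → uℓ < j → ℓ < (ρ j).2.2.length := by
    intro ℓ
    by_cases hcase : 1 ≤ ℓ ∧ ℓ ≤ D
    · obtain ⟨hc1, hc2⟩ := hcase
      have h0mem : (0 : ℕ) ∈ (Finset.range (Tn + 1)).filter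
          (fun j => (ρ j).2.2.length ≤ ℓ) := by
        rw [Finset.mem_filter, Finset.mem_range]
        refine ⟨by omega, ?_⟩
        have h1 : (ρ 0).2.2.length = 1 := by simp [hρ0]
        omega
      have hne : ((Finset.range (Tn + 1)).filter
          (fun j => (ρ j).2.2.length ≤ ℓ)).Nonempty := ⟨0, h0mem⟩
      set m := ((Finset.range (Tn + 1)).filter (fun j => (ρ j).2.2.length ≤ ℓ)).max' hne
        with hmdef
      obtain ⟨hmlt, hmlen⟩ : m < Tn + 1 ∧ (ρ m).2.2.length ≤ ℓ := by
        have hmem := Finset.max'_mem _ hne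
        rw [Finset.mem_filter, Finset.mem_range] at hmem
        exact hmem
      refine ⟨m, fun _ _ => ⟨by omega, ?_, hmlen, ?_⟩⟩
      · by_contra hge
        have := hHigh m (by omega) (by omega)
        omega
      · intro j hj hgt
        by_contra hle2
        have hjmem : j ∈ (Finset.range (Tn + 1)).filter
            (fun j => (ρ j).2.2.length ≤ ℓ) := by
          rw [Finset.mem_filter, Finset.mem_range]
          exact ⟨by omega, by omega⟩
        have := Finset.le_max' _ j hjmem
        omega
    · exact ⟨0, fun h1 h2 => absurd ⟨h1, h2⟩ hcase⟩
  choose u hu using hU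
  -- the heart of the argument
  have key : ∀ j₁ j₂ : ℕ, 1 ≤ j₁ → j₂ ≤ C + 1 → j₁ < j₂ →
      ((ρ (u (j₁ * (K + 1)))).1, (ρ (u (j₁ * (K + 1)))).2.2.head?) =
      ((ρ (u (j₂ * (K + 1)))).1, (ρ (u (j₂ * (K + 1)))).2.2.head?) → False := by
    intro j₁ j₂ hj₁ hj₂ hlt hφ
    have hℓ₁1 : 1 ≤ j₁ * (K + 1) := Nat.mul_pos (by omega) (Nat.succ_pos K)
    have hℓ₂1 : 1 ≤ j₂ * (K + 1) := Nat.mul_pos (by omega) (Nat.succ_pos K)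
    have hℓ₂D : j₂ * (K + 1) ≤ D := by
      have h1 : j₂ * (K + 1) ≤ (C + 1) * (K + 1) := Nat.mul_le_mul_right (K + 1) hj₂
      omega
    have hℓ₁D : j₁ * (K + 1) ≤ D := by
      have h1 : j₁ * (K + 1) ≤ (C + 1) * (K + 1) :=
        Nat.mul_le_mul_right (K + 1) (by omega)
      omega
    have hℓgap : j₁ * (K + 1) + K + 1 ≤ j₂ * (K + 1) := by
      have h1 : (j₁ + 1) * (K + 1) ≤ j₂ * (K + 1) :=
        Nat.mul_le_mul_right (K + 1) (by omega)
      rw [Nat.succ_mul] at h1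
      omega
    obtain ⟨ht₁T, ht₁s, hh₁, hmax₁⟩ := hu (j₁ * (K + 1)) hℓ₁1 hℓ₁D
    obtain ⟨ht₂T, ht₂s, hh₂, hmax₂⟩ := hu (j₂ * (K + 1)) hℓ₂1 hℓ₂D
    set ℓ₁ := j₁ * (K + 1) with hℓ₁def
    set ℓ₂ := j₂ * (K + 1) with hℓ₂def
    set t₁ := u ℓ₁ with ht₁def
    set t₂ := u ℓ₂ with ht₂def
    have ht₁Tn : t₁ < Tn := lt_of_lt_of_le ht₁s htsT
    have ht₂Tn : t₂ < Tn := lt_of_lt_of_le ht₂s htsT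
    rcases hr1 : ρ t₁ with ⟨Q1, v1, s1⟩
    rcases hr2 : ρ t₂ with ⟨Q2, v2, s2⟩
    rw [hr1] at hh₁
    rw [hr2] at hh₂
    try dsimp only at hh₁ hh₂
    have hφ' := hφ
    rw [hr1, hr2] at hφ'
    simp only [Prod.mk.injEq] at hφ'
    obtain ⟨hQ, hhead⟩ := hφ'
    subst hQ
    -- height bound just after t₂
    have hstep₂ := hstepρ t₂ ht₂Tn
    rw [hr2] at hstep₂
    have hheight := step_height hstep₂
    have hafter := hmax₂ (t₂ + 1) ht₂Tn (Nat.lt_succ_self t₂)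
    have hgap : s1.length + 3 ≤ s2.length := by
      try dsimp only at hheight
      try dsimp only at hh₁ hh₂
      omega
    have ht₁₂ : t₁ < t₂ := by
      rcases lt_trichotomy t₁ t₂ with h | h | h
      · exact h
      · exfalso
        rw [h, hr2] at hr1
        have := congrArg (fun c : σ × List ABLetter × List Γ => c.2.2.length) hr1
        dsimp only at this
        omega
      · exfalso
        have hcontra := hmax₂ t₁ ht₁T h
        rw [hr1] at hcontra
        dsimp only at hcontra
        omega
    -- the stack at t₁
    have hs1ne : s1 ≠ [] := by
      intro hnil
      have hs := hstepρ t₁ ht₁Tn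
      rw [hr1, hnil, stepFn_nil] at hs
      simp at hs
    obtain ⟨Z, σb, hZσ⟩ : ∃ Z σb, s1 = Z :: σb := by
      rcases s1 with _ | ⟨Z, σb⟩
      · exact absurd rfl hs1ne
      · exact ⟨Z, σb, rfl⟩
    -- the suffix σb is never touched after t₁
    have hcond : ∀ jj c', jj ≤ Tn - t₁ →
        iter M jj (Q1, v1, [Z] ++ σb) = some c' → σb.length < c'.2.2.length := by
      intro jj c' hjj hit
      have hseg' := hseg t₁ (t₁ + jj) (Nat.le_add_right _ _) (by omega)
      have hjj' : t₁ + jj - t₁ = jj := by omega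
      rw [hjj', hr1, hZσ] at hseg'
      rw [List.singleton_append, hseg'] at hit
      injection hit with hit
      subst hit
      rcases Nat.eq_zero_or_pos jj with h0 | hpos
      · rw [h0, Nat.add_zero, hr1]
        rw [hZσ]
        simp
      · have hmm := hmax₁ (t₁ + jj) (by omega) (by omega)
        have hl1 : s1.length = σb.length + 1 := by rw [hZσ]; simp
        omega
    -- strip σb from the remainder of the accepting run
    have hrunT : iter M (Tn - t₁) (Q1, v1, [Z] ++ σb) = some (qf N, [], sf N) := by
      have hs := hseg t₁ Tn (by omega) (le_refl _)
      rw [hr1, hρT, hZσ] at hs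
      rw [List.singleton_append]
      exact hs
    obtain ⟨y, hyeq, hstripT⟩ := iter_strip (Tn - t₁) Q1 v1 [Z] σb _ hrunT hcond
    have hstripT' : iter M (Tn - t₁) (Q1, v1, [Z]) = some (qf N, [], y) := hstripT
    have hrun2 : iter M (t₂ - t₁) (Q1, v1, [Z] ++ σb) = some (Q1, v2, s2) := by
      have hs := hseg t₁ t₂ (by omega) ht₂T
      rw [hr1, hr2, hZσ] at hs
      rw [List.singleton_append]
      exact hs
    obtain ⟨x₂, hx₂eq, hstrip2⟩ := iter_strip (t₂ - t₁) Q1 v1 [Z] σb _ hrun2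
      (fun jj c' hjj hit => hcond jj c' (by omega) hit)
    have hstrip2' : iter M (t₂ - t₁) (Q1, v1, [Z]) = some (Q1, v2, x₂) := hstrip2
    have hs2x : s2 = x₂ ++ σb := by
      have := congrArg (fun c : σ × List ABLetter × List Γ => c.2.2) hx₂eq
      simpa using this
    -- the stripped stack at t₂ starts with Z again
    have hx₂len : s2.length = x₂.length + σb.length := by rw [hs2x]; simp
    have hs1len : s1.length = σb.length + 1 := by rw [hZσ]; simp
    obtain ⟨Z₂, ψ, hx₂Z⟩ : ∃ Z₂ ψ, x₂ = Z₂ :: ψ := by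
      rcases x₂ with _ | ⟨Z₂, ψ⟩
      · exfalso
        simp at hx₂len
        omega
      · exact ⟨Z₂, ψ, rfl⟩
    have hZ₂Z : Z₂ = Z := by
      have h1 : s2.head? = some Z₂ := by rw [hs2x, hx₂Z]; rfl
      have h2 : s1.head? = some Z := by rw [hZσ]; rfl
      rw [h2, h1] at hhead
      exact (Option.some.inj hhead).symm
    rw [hZ₂Z] at hx₂Z
    subst hx₂Z
    -- the middle segment only depends on the consumed input
    obtain ⟨δ, hδv, hmid⟩ := iter_input' hstrip2'
    simp only at hδv hmid
    -- the stripped tail of the run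
    have htail : iter M (Tn - t₂) (Q1, v2, Z :: ψ) = some (qf N, [], y) := by
      have hs := iter_sub (by omega : t₂ - t₁ ≤ Tn - t₁) hstrip2' hstripT'
      have heq2 : Tn - t₁ - (t₂ - t₁) = Tn - t₂ := by omega
      rw [heq2] at hs
      exact hs
    -- consumed prefixes at t₁ and t₂
    obtain ⟨P₁, hP₁, hrep₁⟩ := hpre t₁ ht₁T
    obtain ⟨P₂, hP₂, hrep₂⟩ := hpre t₂ ht₂T
    rw [hr1] at hP₁ hrep₁
    rw [hr2] at hP₂ hrep₂
    simp only at hP₁ hrep₁ hP₂ hrep₂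
    have hc₁N : P₁.length < N := by
      have h1 := htsmin t₁ ht₁s
      rw [hr1] at h1
      have h2 : P₁.length + v1.length = (zw N).length := by
        have hx := congrArg List.length hP₁
        rw [List.length_append] at hx
        omega
      dsimp only at h1
      omega
    have hc₂N : P₂.length < N := by
      have h1 := htsmin t₂ ht₂s
      rw [hr2] at h1
      have h2 : P₂.length + v2.length = (zw N).length := by
        have hx := congrArg List.length hP₂
        rw [List.length_append] at hx
        omega
      dsimp only at h1
      omega
    have hc₁₂ : P₁.length ≤ P₂.length := by
      have h2 : P₁.length + v1.length = (zw N).length := by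
        have hx := congrArg List.length hP₁
        rw [List.length_append] at hx
        omega
      have h3 : P₂.length + v2.length = (zw N).length := by
        have hx := congrArg List.length hP₂
        rw [List.length_append] at hx
        omega
      have h4 : v2.length ≤ v1.length := by rw [hδv]; simp
      omega
    have hP₁rep : P₁ = repA P₁.length := by
      rw [← take_zw (le_of_lt hc₁N), hP₁, List.take_left]
    have hP₂rep : P₂ = repA P₂.length := by
      rw [← take_zw (le_of_lt hc₂N), hP₂, List.take_left]
    have hP₂P₁δ : P₂ = P₁ ++ δ := by
      apply List.append_cancel_right (bs := v2)
      rw [← hP₂, hP₁, hδv, List.append_assoc]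
    have hδrep : δ = repA (P₂.length - P₁.length) := by
      have h1 : (P₁ ++ δ).drop P₁.length = δ := List.drop_left
      rw [← hP₂P₁δ, hP₂rep] at h1
      rw [← h1]
      simp [repA]
    have hv2eq : v2 = repA (N - P₂.length) ++ ([ABLetter.b, ABLetter.b] ++ repA N) := by
      have h1 : (P₂ ++ v2).drop P₂.length = v2 := List.drop_left
      rw [← hP₂] at h1
      rw [← h1, drop_zw (le_of_lt hc₂N)]
    have hv2ne : v2 ≠ [] := by
      rw [hv2eq]
      simp [repA]
    rcases Nat.eq_zero_or_pos (P₂.length - P₁.length) with hs0 | hs1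
    · -- nothing read between t₁ and t₂ : the run would loop forever
      have hδnil : δ = [] := by rw [hδrep, hs0]; rfl
      have hn₁ : 1 ≤ t₂ - t₁ := by omega
      have hmid0 : ∀ v, iter M (t₂ - t₁) (Q1, v, [Z]) = some (Q1, v, Z :: ψ) := by
        intro v
        have hm := hmid v
        rw [hδnil] at hm
        simpa using hm
      have hpump : ∀ i, ∃ rest, iter M (i * (t₂ - t₁)) (Q1, v2, Z :: σb)
          = some (Q1, v2, Z :: rest) := by
        intro i
        induction i with
        | zero => exact ⟨σb, by rw [Nat.zero_mul, iter_zero]⟩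
        | succ i ih =>
          obtain ⟨rest, hrest⟩ := ih
          have hstep2 := iter_append (t₂ - t₁) Q1 v2 [Z] _ (hmid0 v2) rest
          simp only at hstep2
          refine ⟨ψ ++ rest, ?_⟩
          have hmul : (i + 1) * (t₂ - t₁) = i * (t₂ - t₁) + (t₂ - t₁) := by ring
          rw [hmul, iter_add, hrest, Option.bind_some]
          exact hstep2
      obtain ⟨rest, hbig⟩ := hpump (Tn - t₁ + 1)
      have hE : Tn - t₁ ≤ (Tn - t₁ + 1) * (t₂ - t₁) := by
        have h1 := Nat.le_mul_of_pos_right (Tn - t₁ + 1) (by omega : 0 < t₂ - t₁)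
        omega
      have hv1v2 : v1 = v2 := by rw [hδv, hδnil]; rfl
      have hB : iter M (Tn - t₁) (Q1, v2, Z :: σb) = some (qf N, [], sf N) := by
        have hs := hseg t₁ Tn (by omega) (le_refl _)
        rw [hρT, hr1, hZσ, hv1v2] at hs
        exact hs
      have hafter2 := iter_sub hE hB hbig
      obtain ⟨d2, hd2, -⟩ := iter_input' hafter2
      simp only at hd2
      exact hv2ne (List.append_eq_nil_iff.mp hd2.symm).2
    · -- a nonempty aˢ is read between t₁ and t₂ : pump it once more
      have hR1 : M.Reaches (M.start, P₁ ++ (δ ++ (δ ++ v2)), [M.startSym])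
          (Q1, δ ++ (δ ++ v2), Z :: σb) := by
        apply reaches_of_iter (n := t₁)
        have hx := hrep₁ (δ ++ (δ ++ v2))
        rw [hZσ] at hx
        exact hx
      have hR2 : M.Reaches (Q1, δ ++ (δ ++ v2), Z :: σb) (Q1, δ ++ v2, Z :: (ψ ++ σb)) := by
        apply reaches_of_iter (n := t₂ - t₁)
        exact iter_append (t₂ - t₁) Q1 (δ ++ (δ ++ v2)) [Z] _ (hmid (δ ++ v2)) σb
      have hR3 : M.Reaches (Q1, δ ++ v2, Z :: (ψ ++ σb))
          (Q1, v2, Z :: (ψ ++ (ψ ++ σb))) := by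
        apply reaches_of_iter (n := t₂ - t₁)
        exact iter_append (t₂ - t₁) Q1 (δ ++ v2) [Z] _ (hmid v2) (ψ ++ σb)
      have hR4 : M.Reaches (Q1, v2, Z :: (ψ ++ (ψ ++ σb))) (qf N, [], y ++ (ψ ++ σb)) := by
        apply reaches_of_iter (n := Tn - t₂)
        exact iter_append (Tn - t₂) Q1 v2 (Z :: ψ) _ htail (ψ ++ σb)
      have hWacc : (P₁ ++ (δ ++ (δ ++ v2))) ∈ M.accepts :=
        ⟨qf N, y ++ (ψ ++ σb), Reaches.trans' (Reaches.trans' (Reaches.trans' hR1 hR2) hR3) hR4, hqf N⟩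
      have hWpal : Pal (P₁ ++ (δ ++ (δ ++ v2))) := (hmem _).mp hWacc
      have hshape : P₁ ++ (δ ++ (δ ++ v2))
          = repA (N + (P₂.length - P₁.length)) ++ ([ABLetter.b, ABLetter.b] ++ repA N) := by
        rw [hP₁rep, hδrep, hv2eq, repA_merge, repA_merge, repA_merge]
        have he : P₁.length + (P₂.length - P₁.length) + (P₂.length - P₁.length) +
            (N - P₂.length) = N + (P₂.length - P₁.length) := by omega
        rw [he]
        simp [repA]
      rw [hshape] at hWpal
      have hcontra := pal_abba hWpal
      omega
  -- pigeonhole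
  have hmaps : ∀ j ∈ Finset.Icc 1 (C + 1),
      ((ρ (u (j * (K + 1)))).1, (ρ (u (j * (K + 1)))).2.2.head?) ∈
        (Finset.univ : Finset (σ × Option Γ)) := fun _ _ => Finset.mem_univ _
  have hcards : (Finset.univ : Finset (σ × Option Γ)).card < (Finset.Icc 1 (C + 1)).card := by
    rw [Finset.card_univ, Fintype.card_prod, Fintype.card_option, Nat.card_Icc, hCdef]
    omega
  obtain ⟨j₁, hj₁, j₂, hj₂, hne, heq⟩ :=
    Finset.exists_ne_map_eq_of_card_lt_of_maps_to hcards hmaps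
  rw [Finset.mem_Icc] at hj₁ hj₂
  rcases hne.lt_or_gt with hlt | hlt
  · exact key j₁ j₂ hj₁.1 hj₂.2 hlt heq
  · exact key j₂ j₁ hj₂.1 hj₁.2 hlt heq.symm
end
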